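/- Let M ∈ K^{m×m} be an invertible companion matrix and 1 ≤ s ≤ m-1. For every j with s+1 ≤ j ≤ m and every i with 0 ≤ i ≤ m-1, the rank-one matrix J^i E_{1,j} (M^{-i})^t is trace-orthogonal to M^r for all 0 ≤ r ≤ s-1, i.e., Tr(M^r (J^i E_{1,j} (M^{-i})^t)^t) = 0. -/

import Mathlib

open Matrix

/-- The companion matrix of `x^m - a_m x^{m-1} - ⋯ - a_2 x - a_1`, whose bottom row is
`(a_1, …, a_m)` and which has ones on the superdiagonal. -/
def companionMat {K : Type*} [Field K] {m : ℕ} (a : Fin m → K) : Matrix (Fin m) (Fin m) K :=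
  Matrix.of fun i j => if (i : ℕ) + 1 = m then a j else if (j : ℕ) = (i : ℕ) + 1 then 1 else 0

/-- The cyclic permutation matrix `J` shifting rows downward. -/
def cyclicJ (K : Type*) [Field K] (m : ℕ) [NeZero m] : Matrix (Fin m) (Fin m) K :=
  Matrix.of fun i j => if i = j + 1 then 1 else 0

lemma det_companion {K : Type*} [Field K] {n : ℕ} (a : Fin (n+1) → K) :
    (companionMat a).det = (-1)^n * a 0 := by
  rw [Matrix.det_succ_column_zero]
  rw [Finset.sum_eq_single (Fin.last n)]
  · have h1 : (companionMat a) (Fin.last n) 0 = a 0 := by simp [companionMat]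
    have h2 : ((companionMat a).submatrix (Fin.last n).succAbove Fin.succ) = 1 := by
      ext p q
      simp only [submatrix_apply, companionMat, of_apply, Fin.succAbove_last, Fin.coe_castSucc,
        Fin.val_succ, one_apply]
      have h3 : (p:ℕ) + 1 ≠ n + 1 := by omega
      rw [if_neg h3]
      by_cases h : p = q
      · simp [h]
      · rw [if_neg (by simp [Fin.ext_iff] at h ⊢; omega), if_neg h]
    rw [h1, h2, det_one, mul_one, Fin.val_last]
  · intro b _ hb
    have hbn : (b:ℕ) ≠ n := by simpa [Fin.ext_iff] using hb
    have : (companionMat a) b 0 = 0 := by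
      simp only [companionMat, of_apply]
      rw [if_neg (by omega), if_neg (by simp)]
    simp [this]
  · simp

open Fin.NatCast in
lemma cyclicJ_pow_apply {K : Type*} [Field K] {m : ℕ} [NeZero m] (i : ℕ) (p q : Fin m) :
    ((cyclicJ K m) ^ i) p q = if p = q + (i : Fin m) then 1 else 0 := by
  induction i generalizing p q with
  | zero => simp [one_apply]
  | succ i ih =>
    rw [pow_succ, mul_apply]
    have : ∀ k : Fin m, ((cyclicJ K m) ^ i) p k * (cyclicJ K m) k q
        = if k = q + 1 then ((cyclicJ K m) ^ i) p (q+1) else 0 := by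
      intro k
      simp only [cyclicJ, of_apply]
      by_cases h : k = q + 1 <;> simp [h]
    rw [Finset.sum_congr rfl (fun k _ => this k), Finset.sum_ite_eq' _ (q+1)]
    simp [ih, add_assoc, add_comm (1 : Fin m)]

lemma cyclicJ_mul_transpose {K : Type*} [Field K] {m : ℕ} [NeZero m] :
    (cyclicJ K m) * (cyclicJ K m)ᵀ = 1 := by
  ext p q
  rw [mul_apply]
  simp only [cyclicJ, transpose_apply, of_apply]
  have : ∀ k : Fin m, (if p = k + 1 then (1:K) else 0) * (if q = k + 1 then 1 else 0)
      = if k = p - 1 then (if p = q then 1 else 0) else 0 := by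
    intro k
    by_cases h : k = p - 1
    · subst h
      by_cases h2 : p = q <;> simp [h2, sub_add_cancel, eq_comm]
    · have : p ≠ k + 1 := by
        intro hh; exact h (by rw [hh, add_sub_cancel_right])
      simp [this, h]
  rw [Finset.sum_congr rfl (fun k _ => this k), Finset.sum_ite_eq' _ (p-1)]
  simp [one_apply]

lemma companion_pow_zero_apply {K : Type*} [Field K] {m : ℕ} [NeZero m] (a : Fin m → K)
    (r : ℕ) (hr : r < m) (q : Fin m) :
    ((companionMat a) ^ r) 0 q = if (q : ℕ) = r then 1 else 0 := by
  induction r generalizing q with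
  | zero =>
    rw [pow_zero, one_apply]
    by_cases h : (q:ℕ) = 0
    · simp [h, Fin.ext_iff]
    · simp [h, Fin.ext_iff, Ne.symm h]
  | succ r ih =>
    rw [pow_succ, mul_apply]
    have hrm : r < m := by omega
    have : ∀ k : Fin m, ((companionMat a) ^ r) 0 k * (companionMat a) k q
        = if k = (⟨r, hrm⟩ : Fin m) then (companionMat a) ⟨r, hrm⟩ q else 0 := by
      intro k
      rw [ih hrm]
      by_cases h : k = (⟨r, hrm⟩ : Fin m)
      · simp [h]
      · rw [if_neg (by simpa [Fin.ext_iff] using h)]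
        simp [h]
    rw [Finset.sum_congr rfl (fun k _ => this k), Finset.sum_ite_eq' _ _]
    simp only [Finset.mem_univ, if_true, companionMat, of_apply]
    rw [if_neg (by omega)]

lemma rank_stdBasis_one {K : Type*} [Field K] {m : ℕ} [NeZero m] (j : Fin m) :
    (Matrix.single (0 : Fin m) j (1 : K)).rank = 1 := by
  have hmv : ∀ v : Fin m → K,
      (Matrix.single (0 : Fin m) j (1 : K)).mulVec v
        = v j • (Pi.single (0 : Fin m) (1:K) : Fin m → K) := by
    intro v
    ext k
    simp only [mulVec, dotProduct, Matrix.single, of_apply, Pi.smul_apply, Pi.single_apply,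
      smul_eq_mul]
    by_cases h : (0 : Fin m) = k
    · subst h
      rw [Finset.sum_congr rfl (fun l _ => show ((if (0:Fin m) = 0 ∧ j = l then (1:K) else 0) * v l)
          = if l = j then v j else 0 by
        by_cases hl : l = j
        · subst hl; simp
        · rw [if_neg (fun hc => hl hc.2.symm), if_neg hl, zero_mul])]
      simp
    · rw [Finset.sum_congr rfl (fun l _ => show ((if (0:Fin m) = k ∧ j = l then (1:K) else 0) * v l)
          = 0 by rw [if_neg (fun hc => h hc.1), zero_mul])]
      rw [Finset.sum_const_zero, if_neg (fun hh => h hh.symm), mul_zero]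
  have hr : LinearMap.range (Matrix.single (0 : Fin m) j (1 : K)).mulVecLin
      = K ∙ (Pi.single (0 : Fin m) (1:K) : Fin m → K) := by
    apply le_antisymm
    · rintro x ⟨v, rfl⟩
      exact Submodule.mem_span_singleton.2 ⟨v j, by rw [mulVecLin_apply, hmv]⟩
    · rw [Submodule.span_singleton_le_iff_mem]
      exact ⟨Pi.single j 1, by rw [mulVecLin_apply, hmv]; simp⟩
  rw [Matrix.rank, hr, finrank_span_singleton]
  intro h
  have := congrFun h 0
  simp at this

lemma trace_mul_stdT {K : Type*} [Field K] {m : ℕ} [NeZero m] (j : Fin m)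
    (B : Matrix (Fin m) (Fin m) K) :
    Matrix.trace (B * (Matrix.single (0 : Fin m) j (1:K))ᵀ) = B 0 j := by
  rw [trace_mul_comm, Matrix.trace]
  simp only [diag_apply, mul_apply, transpose_apply, Matrix.single, of_apply]
  have : ∀ k : Fin m, (∑ l, (if (0:Fin m) = l ∧ j = k then (1:K) else 0) * B l k)
      = if k = j then B 0 j else 0 := by
    intro k
    by_cases hk : k = j
    · subst hk
      rw [Finset.sum_congr rfl (fun l _ => show (if (0:Fin m) = l ∧ k = k then (1:K) else 0) * B l k
          = if l = (0:Fin m) then B 0 k else 0 by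
        by_cases hl : l = 0
        · subst hl; simp
        · rw [if_neg (fun hc => hl hc.1.symm), zero_mul, if_neg hl])]
      rw [Finset.sum_ite_eq' _ _]
      simp
    · rw [if_neg hk]
      refine Finset.sum_eq_zero fun l _ => ?_
      rw [if_neg (fun hc => hk hc.2.symm), zero_mul]
  rw [Finset.sum_congr rfl (fun k _ => this k), Finset.sum_ite_eq' _ j]
  simp

lemma companion_row_pick {K : Type*} [Field K] {m : ℕ} [NeZero m] (a : Fin m → K)
    (t : ℕ) (ht : t < m) (A : Matrix (Fin m) (Fin m) K) (q : Fin m) :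
    (((companionMat a) ^ t) * A) 0 q = A ⟨t, ht⟩ q := by
  rw [mul_apply]
  have : ∀ k : Fin m, ((companionMat a)^t) 0 k * A k q
      = if k = (⟨t, ht⟩ : Fin m) then A ⟨t, ht⟩ q else 0 := by
    intro k
    rw [companion_pow_zero_apply a t ht]
    by_cases h : k = (⟨t, ht⟩ : Fin m)
    · subst h; simp
    · rw [if_neg (by simpa [Fin.ext_iff] using h), zero_mul, if_neg h]
  rw [Finset.sum_congr rfl (fun k _ => this k), Finset.sum_ite_eq' _ _]
  simp

open Fin.NatCast in
lemma Jt_row_pick {K : Type*} [Field K] {m : ℕ} [NeZero m]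
    (i : ℕ) (hi : i < m) (A : Matrix (Fin m) (Fin m) K) (q : Fin m) :
    ((((cyclicJ K m) ^ i)ᵀ) * A) 0 q = A ⟨i, hi⟩ q := by
  rw [mul_apply]
  have : ∀ k : Fin m, (((cyclicJ K m)^i)ᵀ) 0 k * A k q
      = if k = (⟨i, hi⟩ : Fin m) then A ⟨i, hi⟩ q else 0 := by
    intro k
    rw [transpose_apply, cyclicJ_pow_apply]
    have hcast : ((0 : Fin m) + (i : Fin m)) = (⟨i, hi⟩ : Fin m) := by
      rw [zero_add]
      ext
      exact Fin.val_cast_of_lt hi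
    rw [hcast]
    by_cases h : k = (⟨i, hi⟩ : Fin m)
    · subst h; simp
    · simp [h]
  rw [Finset.sum_congr rfl (fun k _ => this k), Finset.sum_ite_eq' _ _]
  simp

theorem stmt9 {K : Type*} [Field K] {m s : ℕ} [NeZero m]
    (a : Fin m → K) (ha : a 0 ≠ 0) (hs1 : 1 ≤ s) (hsm : s ≤ m - 1)
    (j : Fin m) (hj : s ≤ (j : ℕ)) (i : ℕ) (hi : i ≤ m - 1) :
    ((cyclicJ K m) ^ i * Matrix.single 0 j 1 * (((companionMat a)⁻¹) ^ i)ᵀ).rank = 1 ∧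
    ∀ r : ℕ, r ≤ s - 1 →
      Matrix.trace ((companionMat a) ^ r *
        ((cyclicJ K m) ^ i * Matrix.single 0 j 1 * (((companionMat a)⁻¹) ^ i)ᵀ)ᵀ) = 0 := by
  have hm : 0 < m := NeZero.pos m
  have him : i < m := by omega
  set M := companionMat a with hM
  set J := cyclicJ K m with hJ
  have hdet : IsUnit M.det := by
    obtain ⟨n, rfl⟩ : ∃ n, m = n + 1 := ⟨m - 1, by omega⟩
    rw [hM, det_companion]
    exact isUnit_iff_ne_zero.2 (mul_ne_zero (pow_ne_zero _ (neg_ne_zero.2 one_ne_zero)) ha)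
  have hdetJ : IsUnit J.det := by
    apply IsUnit.of_mul_eq_one (Jᵀ.det)
    rw [← det_mul, cyclicJ_mul_transpose, det_one]
  constructor
  · rw [rank_mul_eq_left_of_isUnit_det _ _
      (by rw [det_transpose, det_pow]; exact (isUnit_nonsing_inv_det M hdet).pow i)]
    rw [rank_mul_eq_right_of_isUnit_det _ _ (by rw [det_pow]; exact hdetJ.pow i)]
    exact rank_stdBasis_one j
  · intro r hr
    have hrs : r < s := by omega
    have hrm : r < m := by omega
    have hrj : (j : ℕ) ≠ r := by omega
    -- rewrite the trace
    rw [transpose_mul, transpose_mul, transpose_transpose]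
    -- now : trace (M^r * ((((M⁻¹)^i)ᵀᵀ := (M⁻¹)^i) * (Eᵀ * (J^i)ᵀ)))  -- shape check below
    have hcomm : M * M⁻¹ = M⁻¹ * M := by
      rw [mul_nonsing_inv _ hdet, nonsing_inv_mul _ hdet]
    have hkey : M ^ i * (M ^ r * (M⁻¹) ^ i) = M ^ r := by
      rw [← mul_assoc, pow_mul_comm, mul_assoc, ← Commute.mul_pow hcomm,
        mul_nonsing_inv _ hdet, one_pow, mul_one]
    have hzero : (M ^ r * (M⁻¹) ^ i) ⟨i, him⟩ j = 0 := by
      have h1 : (M ^ i * (M ^ r * (M⁻¹) ^ i)) 0 j = (M ^ r * (M⁻¹) ^ i) ⟨i, him⟩ j :=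
        companion_row_pick a i him _ j
      rw [hkey] at h1
      rw [← h1, companion_pow_zero_apply a r hrm, if_neg hrj]
    calc Matrix.trace (M ^ r * ((M⁻¹ ^ i)ᵀᵀ * ((Matrix.single 0 j 1)ᵀ * (J ^ i)ᵀ)))
        = Matrix.trace ((M ^ r * M⁻¹ ^ i) * (Matrix.single 0 j 1)ᵀ * (J ^ i)ᵀ) := by
          rw [transpose_transpose, ← mul_assoc, ← mul_assoc]
      _ = Matrix.trace ((J ^ i)ᵀ * (M ^ r * M⁻¹ ^ i) * (Matrix.single 0 j 1)ᵀ) := by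
          rw [trace_mul_cycle]
      _ = ((J ^ i)ᵀ * (M ^ r * M⁻¹ ^ i)) 0 j := trace_mul_stdT j _
      _ = (M ^ r * M⁻¹ ^ i) ⟨i, him⟩ j := Jt_row_pick i him _ j
      _ = 0 := hzero
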